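/- Let G' be the graph constructed from bipartite G as above. If D' is a strong geodetic set of G' of size at most k + |V(G)|, then D' ∩ V(G) is a dominating set of G of size at most k. -/

import Mathlib

/-- A selection of fixed geodesics between pairs of vertices of `S`:
each element of `P` is a walk whose endpoints lie in `S`, which is a shortest path,
with at most one walk per ordered pair of endpoints, and with the walks chosen for
the two orderings of a pair being reverses of each other. -/
def IsGeodesicSelection {V : Type*} (G : SimpleGraph V) (S : Set V)
    (P : Set ((u : V) × (v : V) × G.Walk u v)) : Prop :=
  (∀ q ∈ P, q.1 ∈ S ∧ q.2.1 ∈ S ∧ q.2.2.IsPath ∧ q.2.2.length = G.dist q.1 q.2.1) ∧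
  (∀ q ∈ P, ∀ q' ∈ P,
    (q.1 = q'.1 ∧ q.2.1 = q'.2.1 → q = q') ∧
    (q.1 = q'.2.1 ∧ q.2.1 = q'.1 → q.2.2.support = q'.2.2.support.reverse))

/-- `S` is a strong geodetic set of `G` if one can fix one shortest path between
each pair of vertices of `S` so that all vertices of `G` are covered. -/
def IsStrongGeodeticSet {V : Type*} (G : SimpleGraph V) (S : Set V) : Prop :=
  ∃ P, IsGeodesicSelection G S P ∧ ∀ w : V, ∃ q ∈ P, w ∈ q.2.2.support

/-- The strong geodetic number: minimum size of a strong geodetic set. -/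
noncomputable def strongGeodeticNumber {V : Type*} (G : SimpleGraph V) : ℕ :=
  sInf {k | ∃ S : Set V, S.ncard = k ∧ IsStrongGeodeticSet G S}

/-- The vertex `u₁` in the construction `G'`. -/
def uOne {V : Type*} : V ⊕ V ⊕ Bool := Sum.inr (Sum.inr false)

/-- The vertex `u₂` in the construction `G'`. -/
def uTwo {V : Type*} : V ⊕ V ⊕ Bool := Sum.inr (Sum.inr true)

/-- The copy `v'` of a vertex `v` in the construction `G'`. -/
def copyOf {V : Type*} (v : V) : V ⊕ V ⊕ Bool := Sum.inr (Sum.inl v)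

/-- The relation generating the graph `G'` obtained from a bipartite `G` with parts `X, Y`
by adding `u₁, u₂` and copies `x'` (`x ∈ X`), `y'` (`y ∈ Y`), with edges `u₁u₂`,
`x u₂`, `u₂ x'` for `x ∈ X`, and `y u₁`, `u₁ y'` for `y ∈ Y`. -/
def gPrimeRel {V : Type*} (G : SimpleGraph V) (X Y : Set V) :
    (V ⊕ V ⊕ Bool) → (V ⊕ V ⊕ Bool) → Prop := fun a b =>
  match a, b with
  | Sum.inl u, Sum.inl v => G.Adj u v
  | Sum.inr (Sum.inr false), Sum.inr (Sum.inr true) => True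
  | Sum.inl v, Sum.inr (Sum.inr true) => v ∈ X
  | Sum.inl v, Sum.inr (Sum.inr false) => v ∈ Y
  | Sum.inr (Sum.inr true), Sum.inr (Sum.inl v) => v ∈ X
  | Sum.inr (Sum.inr false), Sum.inr (Sum.inl v) => v ∈ Y
  | _, _ => False

/-- The graph `G'` of the reduction. -/
def gPrime {V : Type*} (G : SimpleGraph V) (X Y : Set V) : SimpleGraph (V ⊕ V ⊕ Bool) :=
  SimpleGraph.fromRel (gPrimeRel G X Y)


open SimpleGraph

section Helpers

variable {V : Type*} {G : SimpleGraph V} {X Y : Set V}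

lemma nb_inl {w : V ⊕ V ⊕ Bool} {v : V} (h : (gPrime G X Y).Adj w (Sum.inl v)) :
    (∃ u, w = Sum.inl u ∧ G.Adj u v) ∨ (w = Sum.inr (Sum.inr true) ∧ v ∈ X) ∨
      (w = Sum.inr (Sum.inr false) ∧ v ∈ Y) := by
  rcases w with u | u | b
  · simp only [gPrime, SimpleGraph.fromRel_adj, gPrimeRel] at h
    rcases h.2 with h' | h'
    · exact Or.inl ⟨u, rfl, h'⟩
    · exact Or.inl ⟨u, rfl, h'.symm⟩
  · simp [gPrime, SimpleGraph.fromRel_adj, gPrimeRel] at h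
  · cases b
    · simp only [gPrime, SimpleGraph.fromRel_adj, gPrimeRel] at h
      exact Or.inr (Or.inr ⟨rfl, by tauto⟩)
    · simp only [gPrime, SimpleGraph.fromRel_adj, gPrimeRel] at h
      exact Or.inr (Or.inl ⟨rfl, by tauto⟩)

lemma nb_copy {w : V ⊕ V ⊕ Bool} {v : V} (h : (gPrime G X Y).Adj w (Sum.inr (Sum.inl v))) :
    (w = Sum.inr (Sum.inr true) ∧ v ∈ X) ∨ (w = Sum.inr (Sum.inr false) ∧ v ∈ Y) := by
  rcases w with u | u | b
  · simp [gPrime, SimpleGraph.fromRel_adj, gPrimeRel] at h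
  · simp [gPrime, SimpleGraph.fromRel_adj, gPrimeRel] at h
  · cases b
    · simp only [gPrime, SimpleGraph.fromRel_adj, gPrimeRel] at h
      exact Or.inr ⟨rfl, by tauto⟩
    · simp only [gPrime, SimpleGraph.fromRel_adj, gPrimeRel] at h
      exact Or.inl ⟨rfl, by tauto⟩

lemma e12 : (gPrime G X Y).Adj (Sum.inr (Sum.inr false)) (Sum.inr (Sum.inr true)) := by
  simp [gPrime, SimpleGraph.fromRel_adj, gPrimeRel]

lemma eX {x : V} (hx : x ∈ X) : (gPrime G X Y).Adj (Sum.inr (Sum.inr true)) (Sum.inl x) := by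
  simp [gPrime, SimpleGraph.fromRel_adj, gPrimeRel, hx]

lemma eY {y : V} (hy : y ∈ Y) : (gPrime G X Y).Adj (Sum.inr (Sum.inr false)) (Sum.inl y) := by
  simp [gPrime, SimpleGraph.fromRel_adj, gPrimeRel, hy]

lemma eX' {x : V} (hx : x ∈ X) :
    (gPrime G X Y).Adj (Sum.inr (Sum.inr true)) (Sum.inr (Sum.inl x)) := by
  simp [gPrime, SimpleGraph.fromRel_adj, gPrimeRel, hx]

lemma eY' {y : V} (hy : y ∈ Y) :
    (gPrime G X Y).Adj (Sum.inr (Sum.inr false)) (Sum.inr (Sum.inl y)) := by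
  simp [gPrime, SimpleGraph.fromRel_adj, gPrimeRel, hy]

lemma walk_u (hunion : X ∪ Y = Set.univ) (i : Bool) (t : V ⊕ V ⊕ Bool) :
    ∃ w : (gPrime G X Y).Walk (Sum.inr (Sum.inr i)) t, w.length ≤ 2 := by
  have hmem : ∀ v : V, v ∈ X ∨ v ∈ Y := by
    intro v
    have : v ∈ X ∪ Y := hunion ▸ Set.mem_univ v
    exact this
  rcases t with v | v | b
  · rcases hmem v with hv | hv
    · cases i
      · exact ⟨Walk.cons e12 (Walk.cons (eX hv) Walk.nil), by simp⟩
      · exact ⟨Walk.cons (eX hv) Walk.nil, by simp⟩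
    · cases i
      · exact ⟨Walk.cons (eY hv) Walk.nil, by simp⟩
      · exact ⟨Walk.cons e12.symm (Walk.cons (eY hv) Walk.nil), by simp⟩
  · rcases hmem v with hv | hv
    · cases i
      · exact ⟨Walk.cons e12 (Walk.cons (eX' hv) Walk.nil), by simp⟩
      · exact ⟨Walk.cons (eX' hv) Walk.nil, by simp⟩
    · cases i
      · exact ⟨Walk.cons (eY' hv) Walk.nil, by simp⟩
      · exact ⟨Walk.cons e12.symm (Walk.cons (eY' hv) Walk.nil), by simp⟩
  · cases i <;> cases b
    · exact ⟨Walk.nil, by simp⟩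
    · exact ⟨Walk.cons e12 Walk.nil, by simp⟩
    · exact ⟨Walk.cons e12.symm Walk.nil, by simp⟩
    · exact ⟨Walk.nil, by simp⟩

lemma dist_u_le (hunion : X ∪ Y = Set.univ) (i : Bool) (t : V ⊕ V ⊕ Bool) :
    (gPrime G X Y).dist (Sum.inr (Sum.inr i)) t ≤ 2 := by
  obtain ⟨w, hw⟩ := walk_u (G := G) (X := X) (Y := Y) hunion i t
  exact (SimpleGraph.dist_le w).trans hw

lemma dist_le_three (hunion : X ∪ Y = Set.univ) (s t : V ⊕ V ⊕ Bool) :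
    (gPrime G X Y).dist s t ≤ 3 := by
  have hmem : ∀ v : V, v ∈ X ∨ v ∈ Y := fun v => by
    have : v ∈ X ∪ Y := hunion ▸ Set.mem_univ v
    exact this
  have step : ∀ i : Bool, (gPrime G X Y).Adj s (Sum.inr (Sum.inr i)) →
      (gPrime G X Y).dist s t ≤ 3 := by
    intro i h
    obtain ⟨w, hw⟩ := walk_u (G := G) (X := X) (Y := Y) hunion i t
    have := SimpleGraph.dist_le (Walk.cons h w)
    simp only [Walk.length_cons] at this
    omega
  rcases s with v | v | b
  · rcases hmem v with hv | hv
    · exact step true (eX hv).symm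
    · exact step false (eY hv).symm
  · rcases hmem v with hv | hv
    · exact step true (eX' hv).symm
    · exact step false (eY' hv).symm
  · exact (dist_u_le hunion b t).trans (by norm_num)

/-- Structure of a vertex on a path of length ≤ 3. -/
lemma walk_cover {A : Type*} {H : SimpleGraph A} {s t : A} (p : H.Walk s t)
    (hp : p.IsPath) (h3 : p.length ≤ 3) {w : A} (hw : w ∈ p.support) :
    w = s ∨ w = t ∨
      (H.Adj s w ∧ H.Adj w t ∧ s ≠ t ∧ p.length = 2) ∨
      (∃ m, H.Adj s w ∧ H.Adj w m ∧ s ≠ m ∧ p.length = 3) ∨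
      (∃ m, H.Adj m w ∧ H.Adj w t ∧ m ≠ t ∧ p.length = 3) := by
  cases p with
  | nil => simp at hw; tauto
  | cons h1 p =>
    cases p with
    | nil => simp at hw; tauto
    | cons h2 p =>
      cases p with
      | nil =>
        simp only [Walk.support_cons, Walk.support_nil, List.mem_cons,
          List.not_mem_nil, or_false] at hw
        simp [Walk.isPath_def] at hp
        rcases hw with rfl | rfl | rfl
        · tauto
        · exact Or.inr (Or.inr (Or.inl ⟨h1, h2, by tauto, by simp⟩))
        · tauto
      | cons h3' p =>
        cases p with
        | nil =>
          simp only [Walk.support_cons, Walk.support_nil, List.mem_cons,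
            List.not_mem_nil, or_false] at hw
          simp [Walk.isPath_def] at hp
          rcases hw with rfl | rfl | rfl | rfl
          · tauto
          · exact Or.inr (Or.inr (Or.inr (Or.inl ⟨_, h1, h2, by tauto, by simp⟩)))
          · exact Or.inr (Or.inr (Or.inr (Or.inr ⟨_, h2, h3', by tauto, by simp⟩)))
          · tauto
        | cons h4 p => simp at h3; omega

end Helpers

theorem strong_geodetic_gives_dominating {V : Type*} [Fintype V]
    (G : SimpleGraph V) (X Y : Set V) (hX : X.Nonempty) (hY : Y.Nonempty)
    (hunion : X ∪ Y = Set.univ) (hdisj : X ∩ Y = ∅)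
    (hbip : ∀ u v, G.Adj u v → (u ∈ X ∧ v ∈ Y) ∨ (u ∈ Y ∧ v ∈ X))
    (D' : Set (V ⊕ V ⊕ Bool)) (k : ℕ)
    (hsgs : IsStrongGeodeticSet (gPrime G X Y) D')
    (hcard : D'.ncard ≤ k + Nat.card V) :
    (∀ v : V, v ∉ {u : V | Sum.inl u ∈ D'} → ∃ u ∈ {u : V | Sum.inl u ∈ D'}, G.Adj u v) ∧
      {u : V | Sum.inl u ∈ D'}.ncard ≤ k := by
  obtain ⟨P, ⟨hP1, -⟩, hcov⟩ := hsgs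
  -- every copy vertex is in D'
  have hpend : ∀ v : V, Sum.inr (Sum.inl v) ∈ D' := by
    intro v
    have uniq : ∀ {a b : V ⊕ V ⊕ Bool},
        (gPrime G X Y).Adj a (Sum.inr (Sum.inl v)) →
        (gPrime G X Y).Adj b (Sum.inr (Sum.inl v)) → a = b := by
      intro a b ha hb
      rcases nb_copy ha with ⟨rfl, h1⟩ | ⟨rfl, h1⟩ <;>
        rcases nb_copy hb with ⟨rfl, h2⟩ | ⟨rfl, h2⟩
      · rfl
      · have : v ∈ X ∩ Y := ⟨h1, h2⟩
        rw [hdisj] at this; exact this.elim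
      · have : v ∈ X ∩ Y := ⟨h2, h1⟩
        rw [hdisj] at this; exact this.elim
      · rfl
    obtain ⟨q, hq, hw⟩ := hcov (Sum.inr (Sum.inl v))
    obtain ⟨s, t, p⟩ := q
    obtain ⟨hs, ht, hpath, hlen⟩ := hP1 _ hq
    simp only at hs ht hpath hlen hw ⊢
    have h3 : p.length ≤ 3 := by rw [hlen]; exact dist_le_three hunion s t
    rcases walk_cover p hpath h3 hw with h | h |
        ⟨ha, hb, hst, -⟩ | ⟨m, ha, hb, hsm, -⟩ | ⟨m, ha, hb, hmt, -⟩
    · exact h ▸ hs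
    · exact h ▸ ht
    · exact absurd (uniq ha hb.symm) hst
    · exact absurd (uniq ha hb.symm) hsm
    · exact absurd (uniq ha hb.symm) hmt
  -- domination
  have hdom : ∀ v : V, Sum.inl v ∉ D' → ∃ u, Sum.inl u ∈ D' ∧ G.Adj u v := by
    intro v hv
    obtain ⟨q, hq, hw⟩ := hcov (Sum.inl v)
    obtain ⟨s, t, p⟩ := q
    obtain ⟨hs, ht, hpath, hlen⟩ := hP1 _ hq
    simp only at hs ht hpath hlen hw ⊢
    have h3 : p.length ≤ 3 := by rw [hlen]; exact dist_le_three hunion s t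
    rcases walk_cover p hpath h3 hw with h | h |
        ⟨ha, hb, hst, hl2⟩ | ⟨m, ha, hb, hsm, hl3⟩ | ⟨m, ha, hb, hmt, hl3⟩
    · exact absurd (h ▸ hs) hv
    · exact absurd (h ▸ ht) hv
    · rcases nb_inl ha with ⟨u, rfl, hadj⟩ | ⟨rfl, h1⟩ | ⟨rfl, h1⟩
      · exact ⟨u, hs, hadj⟩
      · rcases nb_inl hb.symm with ⟨u, rfl, hadj⟩ | ⟨rfl, h2⟩ | ⟨rfl, h2⟩
        · exact ⟨u, ht, hadj⟩
        · exact absurd rfl hst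
        · have : v ∈ X ∩ Y := ⟨h1, h2⟩
          rw [hdisj] at this; exact this.elim
      · rcases nb_inl hb.symm with ⟨u, rfl, hadj⟩ | ⟨rfl, h2⟩ | ⟨rfl, h2⟩
        · exact ⟨u, ht, hadj⟩
        · have : v ∈ X ∩ Y := ⟨h2, h1⟩
          rw [hdisj] at this; exact this.elim
        · exact absurd rfl hst
    · rcases nb_inl ha with ⟨u, rfl, hadj⟩ | ⟨rfl, h1⟩ | ⟨rfl, h1⟩
      · exact ⟨u, hs, hadj⟩
      · have := dist_u_le (G := G) hunion true t
        rw [← hlen, hl3] at this; omega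
      · have := dist_u_le (G := G) hunion false t
        rw [← hlen, hl3] at this; omega
    · rcases nb_inl hb.symm with ⟨u, rfl, hadj⟩ | ⟨rfl, h1⟩ | ⟨rfl, h1⟩
      · exact ⟨u, ht, hadj⟩
      · have := dist_u_le (G := G) hunion true s
        rw [SimpleGraph.dist_comm, ← hlen, hl3] at this; omega
      · have := dist_u_le (G := G) hunion false s
        rw [SimpleGraph.dist_comm, ← hlen, hl3] at this; omega
  refine ⟨fun v hv => hdom v hv, ?_⟩
  -- cardinality
  set A := {u : V | Sum.inl u ∈ D'} with hAdef
  have hsub : (Sum.inl '' A) ∪ ((fun v : V => (Sum.inr (Sum.inl v) : V ⊕ V ⊕ Bool)) '' Set.univ) ⊆ D' := by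
    rintro a (⟨u, hu, rfl⟩ | ⟨u, -, rfl⟩)
    · exact hu
    · exact hpend u
  have hdisj2 : Disjoint (Sum.inl '' A) ((fun v : V => (Sum.inr (Sum.inl v) : V ⊕ V ⊕ Bool)) '' Set.univ) := by
    rw [Set.disjoint_left]
    rintro a ⟨u, hu, rfl⟩ ⟨w, -, h⟩
    simp at h
  have hunion' := Set.ncard_union_eq hdisj2 (Set.toFinite _) (Set.toFinite _)
  have hA : ((Sum.inl : V → V ⊕ V ⊕ Bool) '' A).ncard = A.ncard :=
    Set.ncard_image_of_injective _ Sum.inl_injective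
  have hC : ((fun v : V => (Sum.inr (Sum.inl v) : V ⊕ V ⊕ Bool)) '' Set.univ).ncard = Nat.card V := by
    rw [Set.ncard_image_of_injective _ (fun a b h => by simpa using h)]
    exact Set.ncard_univ V
  have hle := Set.ncard_le_ncard hsub (Set.toFinite D')
  omega
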